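/- Let G be a triangle-free cubic graph and v a vertex such that for some edge e = {v,w} incident to v, the graph G' = (V, E∖{e}) is a cluster ⋈ chordal graph. Then G contains a Hamiltonian cycle. (Specifically, the chordal part must be a Hamiltonian path from v to w, which together with e closes into a Hamiltonian cycle.) -/

import Mathlib

/-- `G` has an induced cycle on `n` vertices. -/
def HasInducedCycle {V : Type*} (G : SimpleGraph V) (n : ℕ) : Prop :=
  ∃ f : ZMod n → V, Function.Injective f ∧
    ∀ i j : ZMod n, G.Adj (f i) (f j) ↔ (j = i + 1 ∨ i = j + 1)

section Helpers

open SimpleGraph List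

variable {V : Type*} {G : SimpleGraph V}

lemma walk_support_eq_map_getVert {s t : V} (p : G.Walk s t) :
    p.support = (List.range (p.length + 1)).map p.getVert := by
  induction p with
  | nil => simp [List.range_succ]
  | @cons u x t h q ih =>
    rw [Walk.support_cons, ih, Walk.length_cons]
    conv_rhs => rw [List.range_succ_eq_map]
    rw [List.map_cons, List.map_map]
    congr 1

lemma walk_getVert_mem_support {s t : V} (p : G.Walk s t) {k : ℕ} (hk : k ≤ p.length) :
    p.getVert k ∈ p.support := by
  rw [walk_support_eq_map_getVert]
  exact List.mem_map.mpr ⟨k, List.mem_range.mpr (by omega), rfl⟩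

lemma walk_getVert_inj {s t : V} (p : G.Walk s t) (hnd : p.support.Nodup)
    {i j : ℕ} (hi : i ≤ p.length) (hj : j ≤ p.length) (h : p.getVert i = p.getVert j) :
    i = j := by
  rw [walk_support_eq_map_getVert] at hnd
  exact (List.nodup_map_iff_inj_on List.nodup_range).mp hnd i
    (List.mem_range.mpr (by omega)) j (List.mem_range.mpr (by omega)) h

lemma cycle_getVert_inj {u : V} (c : G.Walk u u) (hnd : c.support.tail.Nodup)
    {i j : ℕ} (hi1 : 1 ≤ i) (hi : i ≤ c.length) (hj1 : 1 ≤ j) (hj : j ≤ c.length)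
    (h : c.getVert i = c.getVert j) : i = j := by
  have hs : c.support.tail = (List.range c.length).map (fun k => c.getVert (k + 1)) := by
    rw [walk_support_eq_map_getVert, List.range_succ_eq_map]
    simp [List.map_map, Function.comp]
  rw [hs] at hnd
  have := (List.nodup_map_iff_inj_on List.nodup_range).mp hnd (i - 1)
    (List.mem_range.mpr (by omega)) (j - 1) (List.mem_range.mpr (by omega))
  have hh : c.getVert (i - 1 + 1) = c.getVert (j - 1 + 1) := by
    rw [show i - 1 + 1 = i by omega, show j - 1 + 1 = j by omega]; exact h
  have h2 : i - 1 = j - 1 := this hh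
  omega

lemma walk_exists_prefix (b : ℕ) : ∀ {s t : V} (p : G.Walk s t), b ≤ p.length →
    ∃ q : G.Walk s (p.getVert b), q.length = b ∧ ∀ k, k ≤ b → q.getVert k = p.getVert k := by
  induction b with
  | zero =>
    intro s t p _
    refine ⟨Walk.nil.copy rfl (p.getVert_zero).symm, by simp, ?_⟩
    intro k hk
    interval_cases k
    simp [Walk.getVert_copy]
  | succ b ih =>
    intro s t p hb
    cases p with
    | nil => simp at hb
    | @cons _ x _ h q =>
      obtain ⟨r, hr1, hr2⟩ := ih q (by simp [Walk.length_cons] at hb; omega)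
      refine ⟨(Walk.cons h r).copy rfl (Walk.getVert_cons_succ q h).symm, by simp [hr1], ?_⟩
      intro k hk
      rw [Walk.getVert_copy]
      match k with
      | 0 => simp
      | (k' + 1) =>
        rw [Walk.getVert_cons_succ, Walk.getVert_cons_succ]
        exact hr2 k' (by omega)

lemma walk_exists_suffix (a : ℕ) : ∀ {s t : V} (p : G.Walk s t), a ≤ p.length →
    ∃ q : G.Walk (p.getVert a) t, q.length = p.length - a ∧
      ∀ k, q.getVert k = p.getVert (a + k) := by
  induction a with
  | zero =>
    intro s t p _
    refine ⟨p.copy (p.getVert_zero).symm rfl, by simp, ?_⟩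
    intro k
    simp [Walk.getVert_copy]
  | succ a ih =>
    intro s t p ha
    cases p with
    | nil => simp at ha
    | @cons _ x _ h q =>
      obtain ⟨r, hr1, hr2⟩ := ih q (by simp [Walk.length_cons] at ha; omega)
      refine ⟨r.copy (Walk.getVert_cons_succ q h).symm rfl, ?_, ?_⟩
      · simp [hr1, Walk.length_cons]
      · intro k
        rw [Walk.getVert_copy, hr2 k, show a + 1 + k = (a + k) + 1 by omega,
          Walk.getVert_cons_succ]

lemma walk_edge_start {y x z : V} (q : G.Walk y x) (hq : q.IsPath)
    (h : s(y, z) ∈ q.edges) : z = q.getVert 1 := by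
  cases q with
  | nil => simp at h
  | @cons _ y₁ _ hadj q' =>
    rw [Walk.edges_cons, List.mem_cons] at h
    rcases h with h | h
    · rw [Sym2.eq_iff] at h
      rcases h with ⟨-, rfl⟩ | ⟨h1, rfl⟩
      · rw [Walk.getVert_cons_succ, Walk.getVert_zero]
      · exact absurd h1 hadj.ne
    · exfalso
      have hy : y ∈ q'.support := Walk.fst_mem_support_of_mem_edges q' h
      rw [Walk.cons_isPath_iff] at hq
      exact hq.2 hy

lemma degree_le_one_of_max_path [Fintype V] [DecidableEq V] [DecidableRel G.Adj]
    (hac : G.IsAcyclic) {x y : V} (p : G.Walk x y) (hp : p.IsPath)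
    (hmax : ∀ z, G.Adj y z → z ∈ p.support) : G.degree y ≤ 1 := by
  classical
  have key : ∀ z, G.Adj y z → z = p.reverse.getVert 1 := by
    intro z hz
    have hzs : z ∈ p.reverse.support := by
      rw [Walk.support_reverse, List.mem_reverse]; exact hmax z hz
    set q := p.reverse with hq
    have hqp : q.IsPath := hp.reverse
    have htu : (q.takeUntil z hzs).IsPath := hqp.takeUntil hzs
    have hnc := hac (Walk.cons hz.symm (q.takeUntil z hzs))
    rw [Walk.cons_isCycle_iff] at hnc
    push_neg at hnc
    have hedge : s(z, y) ∈ (q.takeUntil z hzs).edges := hnc htu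
    have hedge' : s(y, z) ∈ q.edges := by
      rw [Sym2.eq_swap] at hedge
      exact Walk.edges_takeUntil_subset q hzs hedge
    exact walk_edge_start q hqp hedge'
  rw [← card_neighborFinset_eq_degree]
  apply Finset.card_le_one.mpr
  intro a ha b hb
  rw [mem_neighborFinset] at ha hb
  rw [key a ha, key b hb]

lemma exists_max_path [Fintype V] {G : SimpleGraph V} (x : V) :
    ∃ (y : V) (p : G.Walk x y), p.IsPath ∧ ∀ z, G.Adj y z → z ∈ p.support := by
  classical
  suffices h : ∀ (k : ℕ) (y : V) (p : G.Walk x y), p.IsPath →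
      Fintype.card V ≤ p.length + k →
      ∃ (y' : V) (p' : G.Walk x y'), p'.IsPath ∧ ∀ z, G.Adj y' z → z ∈ p'.support by
    exact h (Fintype.card V) x Walk.nil (Walk.IsPath.nil) (by simp)
  intro k
  induction k with
  | zero =>
    intro y p hp hcard
    exfalso
    have := hp.support_nodup.length_le_card
    rw [Walk.length_support] at this
    omega
  | succ k ih =>
    intro y p hp hcard
    by_cases hall : ∀ z, G.Adj y z → z ∈ p.support
    · exact ⟨y, p, hp, hall⟩
    · push_neg at hall
      obtain ⟨z, hyz, hzs⟩ := hall
      set p' := (Walk.cons hyz.symm p.reverse).reverse with hp'def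
      have hp'path : p'.IsPath := by
        apply Walk.IsPath.reverse
        rw [Walk.cons_isPath_iff]
        exact ⟨hp.reverse, by rwa [Walk.support_reverse, List.mem_reverse]⟩
      have hlen : p'.length = p.length + 1 := by
        simp [hp'def]
      exact ih z p' hp'path (by omega)

lemma cycle_no_chord {u : V} (c : G.Walk u u) (hc : c.IsCycle)
    (hmin : ∀ (x : V) (d : G.Walk x x), d.IsCycle → c.length ≤ d.length)
    {a b : ℕ} (ha : 1 ≤ a) (hab : a < b) (hb : b ≤ c.length)
    (hadj : G.Adj (c.getVert a) (c.getVert b)) :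
    b = a + 1 ∨ (a = 1 ∧ b = c.length) := by
  classical
  by_contra hcon
  push_neg at hcon
  have hL3 : 3 ≤ c.length := hc.three_le_length
  obtain ⟨r, hr1, hr2⟩ := walk_exists_suffix a c (by omega)
  obtain ⟨q, hq1, hq2⟩ := walk_exists_prefix (b - a) r (by omega)
  have hend : r.getVert (b - a) = c.getVert b := by
    rw [hr2]; congr 1; omega
  set q' : G.Walk (c.getVert a) (c.getVert b) := q.copy rfl hend with hq'def
  have hq'len : q'.length = b - a := by simp [hq'def, hq1]
  have hq'gv : ∀ k, k ≤ b - a → q'.getVert k = c.getVert (a + k) := by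
    intro k hk
    rw [hq'def, Walk.getVert_copy, hq2 k hk, hr2]
  have hq'path : q'.IsPath := by
    rw [Walk.isPath_def, walk_support_eq_map_getVert]
    apply List.Nodup.map_on _ List.nodup_range
    intro k hk k' hk' hkk
    rw [List.mem_range] at hk hk'
    rw [hq'len] at hk hk'
    rw [hq'gv k (by omega), hq'gv k' (by omega)] at hkk
    have := cycle_getVert_inj c hc.2 (show 1 ≤ a + k by omega) (by omega)
      (show 1 ≤ a + k' by omega) (by omega) hkk
    omega
  have hchord : s(c.getVert b, c.getVert a) ∉ q'.edges := by
    intro hin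
    rw [Sym2.eq_swap] at hin
    have := walk_edge_start q' hq'path hin
    rw [hq'gv 1 (by omega)] at this
    have := cycle_getVert_inj c hc.2 (show 1 ≤ b by omega) (by omega)
      (show 1 ≤ a + 1 by omega) (by omega) this
    omega
  have hcyc : (Walk.cons hadj.symm q').IsCycle := by
    rw [Walk.cons_isCycle_iff]
    exact ⟨hq'path, hchord⟩
  have := hmin _ _ hcyc
  rw [Walk.length_cons, hq'len] at this
  rcases Nat.eq_or_lt_of_le ha with h1 | h1
  · exact hcon.2 h1.symm (by omega)
  · omega

lemma acyclic_of_no_induced {G2 G : SimpleGraph V} (htf : G.CliqueFree 3) (hle : G2 ≤ G)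
    (hch : ∀ n, 4 ≤ n → ¬ HasInducedCycle G2 n) : G2.IsAcyclic := by
  classical
  intro u0 c0 hc0
  have hP : ∃ L, ∃ (x : V) (d : G2.Walk x x), d.IsCycle ∧ d.length = L :=
    ⟨c0.length, u0, c0, hc0, rfl⟩
  obtain ⟨x, d, hd, hdL⟩ := Nat.find_spec hP
  have hmin : ∀ (y : V) (e : G2.Walk y y), e.IsCycle → d.length ≤ e.length := by
    intro y e he
    rw [hdL]
    exact Nat.find_min' hP ⟨y, e, he, rfl⟩
  have hL3 : 3 ≤ d.length := hd.three_le_length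
  by_cases h3 : d.length = 3
  · -- triangle, contradiction with CliqueFree 3
    have h01 : G2.Adj x (d.getVert 1) := by
      have := d.adj_getVert_succ (show 0 < d.length by omega)
      rwa [Walk.getVert_zero] at this
    have h12 : G2.Adj (d.getVert 1) (d.getVert 2) := d.adj_getVert_succ (by omega)
    have h20 : G2.Adj (d.getVert 2) x := by
      have := d.adj_getVert_succ (show 2 < d.length by omega)
      rwa [show (2 : ℕ) + 1 = d.length by omega, Walk.getVert_length] at this
    exact htf {x, d.getVert 1, d.getVert 2}
      (is3Clique_triple_iff.mpr ⟨hle h01, hle h20.symm, hle h12⟩)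
  · haveI : NeZero d.length := ⟨by omega⟩
    apply hch d.length (by omega)
    have hval : ∀ i : ZMod d.length, (i + 1).val = (i.val + 1) % d.length := by
      intro i
      rw [ZMod.val_add, ZMod.val_one_eq_one_mod, Nat.mod_eq_of_lt (show 1 < d.length by omega)]
    have hvlt : ∀ i : ZMod d.length, i.val < d.length := fun i => ZMod.val_lt i
    refine ⟨fun i => d.getVert (i.val + 1), ?_, ?_⟩
    · intro i j hij
      have h1 := hvlt i; have h2 := hvlt j
      have := cycle_getVert_inj d hd.2 (show 1 ≤ i.val + 1 by omega) (by omega)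
        (show 1 ≤ j.val + 1 by omega) (by omega) hij
      exact ZMod.val_injective _ (by omega)
    · have step : ∀ i : ZMod d.length, G2.Adj (d.getVert (i.val + 1)) (d.getVert ((i + 1).val + 1)) := by
        intro i
        rw [hval i]
        rcases Nat.lt_or_ge (i.val + 1) d.length with h | h
        · rw [Nat.mod_eq_of_lt h]
          exact d.adj_getVert_succ h
        · have hiv : i.val + 1 = d.length := by have := hvlt i; omega
          rw [hiv, Nat.mod_self, Walk.getVert_length]
          have h0 := d.adj_getVert_succ (show 0 < d.length by omega)
          rwa [Walk.getVert_zero] at h0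
      intro i j
      constructor
      · intro hA
        have hne : i.val ≠ j.val := by
          intro h
          exact G2.irrefl (by rwa [ZMod.val_injective _ h] at hA)
        have h1 := hvlt i; have h2 := hvlt j
        rcases Nat.lt_or_ge i.val j.val with hlt | hge
        · rcases cycle_no_chord d hd hmin (show 1 ≤ i.val + 1 by omega) (by omega) (by omega) hA
            with h | ⟨ha1, hbL⟩
          · left
            apply ZMod.val_injective
            rw [hval i, Nat.mod_eq_of_lt (by omega)]
            omega
          · right
            apply ZMod.val_injective
            rw [hval j]
            have : j.val + 1 = d.length := by omega
            rw [this, Nat.mod_self]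
            omega
        · rcases cycle_no_chord d hd hmin (show 1 ≤ j.val + 1 by omega) (by omega) (by omega) hA.symm
            with h | ⟨ha1, hbL⟩
          · right
            apply ZMod.val_injective
            rw [hval j, Nat.mod_eq_of_lt (by omega)]
            omega
          · left
            apply ZMod.val_injective
            rw [hval i]
            have : i.val + 1 = d.length := by omega
            rw [this, Nat.mod_self]
            omega
      · rintro (rfl | rfl)
        · exact step i
        · exact (step j).symm

lemma acyclic_bound [Fintype V] [DecidableEq V] (m : ℕ) :
    ∀ (G : SimpleGraph V) [DecidableRel G.Adj], G.IsAcyclic →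
    G.edgeFinset.card = m → ∀ s : Finset V, (∀ e ∈ G.edgeFinset, ∀ x ∈ e, x ∈ s) →
    m + 1 ≤ s.card ∨ m = 0 := by
  induction m with
  | zero => intro G _ _ _ s _; right; rfl
  | succ m ih =>
    intro G instG hac hcard s hs
    left
    obtain ⟨e₀, he₀⟩ := Finset.card_pos.mp (by omega : 0 < G.edgeFinset.card)
    revert he₀
    induction e₀ using Sym2.ind with
    | _ x1 x2 =>
    intro he₀
    have hadj12 : G.Adj x1 x2 := by rwa [mem_edgeFinset, mem_edgeSet] at he₀
    obtain ⟨y, p, hp, hmax⟩ := exists_max_path (G := G) x1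
    have hpnotnil : ¬ p.Nil := by
      intro hnil
      have hlen0 : p.length = 0 := (Walk.nil_iff_length_eq).mp hnil
      have hy : y = x1 := by
        have := p.getVert_length
        rw [hlen0, p.getVert_zero] at this
        exact this.symm
      subst hy
      have := hmax x2 hadj12
      rw [walk_support_eq_map_getVert, hlen0] at this
      simp [List.range_succ] at this
      exact G.irrefl (this ▸ hadj12)
    set z0 := p.reverse.getVert 1 with hz0
    have hadjy : G.Adj y z0 := by
      apply Walk.adj_snd
      rw [Walk.nil_iff_length_eq, Walk.length_reverse]
      rw [Walk.nil_iff_length_eq] at hpnotnil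
      exact hpnotnil
    have hdeg : G.degree y ≤ 1 := degree_le_one_of_max_path hac p hp hmax
    have hnbr : G.neighborFinset y = {z0} := by
      rw [Finset.eq_singleton_iff_unique_mem]
      refine ⟨(mem_neighborFinset _ _ _).mpr hadjy, ?_⟩
      intro b hb
      rw [← card_neighborFinset_eq_degree] at hdeg
      exact Finset.card_le_one.mp hdeg b hb z0 ((mem_neighborFinset _ _ _).mpr hadjy)
    have he₀' : s(y, z0) ∈ G.edgeFinset := by rwa [mem_edgeFinset, mem_edgeSet]
    set G' := G.deleteEdges {s(y, z0)} with hG'def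
    letI instG' : DecidableRel G'.Adj := fun a b =>
      decidable_of_iff (G.Adj a b ∧ ¬ s(a, b) = s(y, z0)) (by
        rw [hG'def, deleteEdges_adj]; simp)
    have hacG' : G'.IsAcyclic := fun u c hc =>
      hac (c.mapLe (G.deleteEdges_le _)) (hc.mapLe _)
    have hE' : G'.edgeFinset = G.edgeFinset.erase s(y, z0) := by
      ext e
      rw [mem_edgeFinset, Finset.mem_erase, mem_edgeFinset, hG'def, edgeSet_deleteEdges]
      simp [and_comm]
    have hcard' : G'.edgeFinset.card = m := by
      rw [hE', Finset.card_erase_of_mem he₀', hcard]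
      omega
    have hs' : ∀ e ∈ G'.edgeFinset, ∀ x ∈ e, x ∈ s.erase y := by
      intro e he x hx
      rw [Finset.mem_erase]
      have hxs : x ∈ s := hs e (by rw [hE'] at he; exact Finset.mem_of_mem_erase he) x hx
      refine ⟨?_, hxs⟩
      rintro rfl
      revert he hx
      induction e using Sym2.ind with
      | _ a b =>
      intro hx he
      have hab : G'.Adj a b := by rwa [mem_edgeFinset, mem_edgeSet] at he
      rw [hG'def, deleteEdges_adj] at hab
      rw [Sym2.mem_iff] at hx
      rcases hx with rfl | rfl
      · have : b ∈ G.neighborFinset x := (mem_neighborFinset _ _ _).mpr hab.1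
        rw [hnbr, Finset.mem_singleton] at this
        subst this
        exact hab.2 (by simp)
      · have : a ∈ G.neighborFinset x := (mem_neighborFinset _ _ _).mpr hab.1.symm
        rw [hnbr, Finset.mem_singleton] at this
        subst this
        exact hab.2 (by rw [Sym2.eq_swap]; simp)
    have hy_s : y ∈ s := hs _ he₀' y (Sym2.mem_mk_left _ _)
    have hz0_s : z0 ∈ s := hs _ he₀' z0 (Sym2.mem_mk_right _ _)
    have hcard_pos : 1 ≤ s.card := Finset.card_pos.mpr ⟨y, hy_s⟩
    rcases ih G' hacG' hcard' (s.erase y) hs' with hb | hb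
    · have := Finset.card_erase_of_mem hy_s
      omega
    · subst hb
      have hsub : ({y, z0} : Finset V) ⊆ s := by
        intro t ht
        simp only [Finset.mem_insert, Finset.mem_singleton] at ht
        rcases ht with rfl | rfl
        · exact hy_s
        · exact hz0_s
      have h2 : ({y, z0} : Finset V).card = 2 := by
        rw [Finset.card_insert_of_notMem (by simp [hadjy.ne]), Finset.card_singleton]
      have := Finset.card_le_card hsub
      omega

end Helpers

open SimpleGraph List in
/-- If `G` is a triangle-free cubic graph and deleting some edge `{v,w}` yields a
cluster ⋈ chordal graph, then `G` contains a Hamiltonian cycle. -/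
theorem clusterChordal_implies_hamiltonian {V : Type*} [Fintype V] [DecidableEq V]
    (G : SimpleGraph V) [DecidableRel G.Adj]
    (htf : G.CliqueFree 3) (hcubic : ∀ v : V, G.degree v = 3)
    (v w : V) (hvw : G.Adj v w)
    (G1 G2 : SimpleGraph V)
    (hcluster : ∃ s : Setoid V, ∀ a b : V, G1.Adj a b ↔ (s.r a b ∧ a ≠ b))
    (hchordal : ∀ n, 4 ≤ n → ¬ HasInducedCycle G2 n)
    (hunion : G1 ⊔ G2 = G.deleteEdges {s(v, w)}) :
    ∃ c : ZMod (Fintype.card V) ≃ V,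
      ∀ i : ZMod (Fintype.card V), G.Adj (c i) (c (i + 1)) := by
  classical
  obtain ⟨st, hst⟩ := hcluster
  letI instG1 : DecidableRel G1.Adj := Classical.decRel _
  letI instG2 : DecidableRel G2.Adj := Classical.decRel _
  set Gd := G.deleteEdges {s(v, w)} with hGd
  letI instGd : DecidableRel Gd.Adj := Classical.decRel _
  set n := Fintype.card V with hn
  have hvw_ne : v ≠ w := hvw.ne
  have hn2 : 2 ≤ n := by
    have hsub : ({v, w} : Finset V) ⊆ Finset.univ := Finset.subset_univ _
    have h2 : ({v, w} : Finset V).card = 2 := by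
      rw [Finset.card_insert_of_notMem (by simp [hvw_ne]), Finset.card_singleton]
    have := Finset.card_le_card hsub
    rw [h2, Finset.card_univ] at this
    exact this
  have hG1led : G1 ≤ Gd := le_trans le_sup_left (le_of_eq hunion)
  have hG2led : G2 ≤ Gd := le_trans le_sup_right (le_of_eq hunion)
  have hG1le : G1 ≤ G := le_trans hG1led (G.deleteEdges_le _)
  have hG2le : G2 ≤ G := le_trans hG2led (G.deleteEdges_le _)
  -- matching bound
  have hdeg1le : ∀ x, G1.degree x ≤ 1 := by
    intro x
    by_contra hx
    push_neg at hx
    rw [← card_neighborFinset_eq_degree] at hx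
    obtain ⟨a, ha, b, hb, hab⟩ := Finset.one_lt_card.mp hx
    rw [mem_neighborFinset] at ha hb
    have hra := ((hst x a).mp ha).1
    have hrb := ((hst x b).mp hb).1
    have hab' : G1.Adj a b := (hst a b).mpr ⟨st.iseqv.trans (st.iseqv.symm hra) hrb, hab⟩
    exact htf {x, a, b} (is3Clique_triple_iff.mpr ⟨hG1le ha, hG1le hb, hG1le hab'⟩)
  have hac2 : G2.IsAcyclic := acyclic_of_no_induced htf hG2le hchordal
  -- edge counting
  have hsumG : ∑ x : V, G.degree x = 3 * n := by
    rw [Finset.sum_congr rfl (fun x _ => hcubic x)]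
    simp [Finset.card_univ, mul_comm, hn]
  have hEG : 2 * G.edgeFinset.card = 3 * n := by
    rw [← G.sum_degrees_eq_twice_card_edges]; exact hsumG
  have hevw : s(v, w) ∈ G.edgeFinset := by rwa [mem_edgeFinset, mem_edgeSet]
  have hEd : Gd.edgeFinset = G.edgeFinset.erase s(v, w) := by
    ext e
    rw [mem_edgeFinset, Finset.mem_erase, mem_edgeFinset, hGd, edgeSet_deleteEdges]
    simp [and_comm]
  have hEdcard : Gd.edgeFinset.card + 1 = G.edgeFinset.card := by
    rw [hEd, Finset.card_erase_of_mem hevw]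
    have : 1 ≤ G.edgeFinset.card := Finset.card_pos.mpr ⟨_, hevw⟩
    omega
  have hEun : G1.edgeFinset ∪ G2.edgeFinset = Gd.edgeFinset := by
    ext e
    rw [Finset.mem_union, mem_edgeFinset, mem_edgeFinset, mem_edgeFinset, ← hunion,
      edgeSet_sup]
    simp
  have h2E1 : 2 * G1.edgeFinset.card ≤ n := by
    rw [← G1.sum_degrees_eq_twice_card_edges]
    calc ∑ x : V, G1.degree x ≤ ∑ _x : V, 1 := Finset.sum_le_sum (fun x _ => hdeg1le x)
    _ = n := by simp [Finset.card_univ, hn]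
  have hE2b : G2.edgeFinset.card + 1 ≤ n ∨ G2.edgeFinset.card = 0 := by
    have := acyclic_bound (G2.edgeFinset.card) G2 hac2 rfl Finset.univ
      (fun e _ x _ => Finset.mem_univ x)
    rwa [Finset.card_univ] at this
  have hcui := Finset.card_union_add_card_inter G1.edgeFinset G2.edgeFinset
  rw [hEun] at hcui
  have hI0 : (G1.edgeFinset ∩ G2.edgeFinset).card = 0 ∧
      2 * G1.edgeFinset.card = n ∧ G2.edgeFinset.card = n - 1 := by omega
  have hIempty : G1.edgeFinset ∩ G2.edgeFinset = ∅ := Finset.card_eq_zero.mp hI0.1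
  -- degree decomposition
  have hdegd : ∀ x, Gd.degree x = G1.degree x + G2.degree x := by
    intro x
    have hnbr : Gd.neighborFinset x = G1.neighborFinset x ∪ G2.neighborFinset x := by
      ext z
      rw [Finset.mem_union, mem_neighborFinset, mem_neighborFinset, mem_neighborFinset,
        ← hunion, sup_adj]
    have hdisj : Disjoint (G1.neighborFinset x) (G2.neighborFinset x) := by
      rw [Finset.disjoint_left]
      intro z hz1 hz2
      rw [mem_neighborFinset] at hz1 hz2
      have : s(x, z) ∈ G1.edgeFinset ∩ G2.edgeFinset := by
        rw [Finset.mem_inter, mem_edgeFinset, mem_edgeFinset, mem_edgeSet, mem_edgeSet]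
        exact ⟨hz1, hz2⟩
      rw [hIempty] at this
      exact absurd this (Finset.notMem_empty _)
    rw [← card_neighborFinset_eq_degree, ← card_neighborFinset_eq_degree,
      ← card_neighborFinset_eq_degree, hnbr, Finset.card_union_of_disjoint hdisj]
  have hdG1 : ∀ x, G1.degree x = 1 := by
    intro x0
    by_contra hx0
    have hx00 : G1.degree x0 = 0 := by have := hdeg1le x0; omega
    have hsum1 : ∑ x : V, G1.degree x = n := by
      rw [G1.sum_degrees_eq_twice_card_edges]; omega
    have hsplit := Finset.sum_erase_add Finset.univ (fun x => G1.degree x)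
      (Finset.mem_univ x0)
    have hble : ∑ x ∈ Finset.univ.erase x0, G1.degree x ≤
        ∑ _x ∈ Finset.univ.erase x0, 1 :=
      Finset.sum_le_sum (fun x _ => hdeg1le x)
    rw [Finset.sum_const, smul_eq_mul, mul_one, Finset.card_erase_of_mem (Finset.mem_univ x0),
      Finset.card_univ] at hble
    rw [hsum1, hx00] at hsplit
    omega
  -- Gd degrees
  have hdegdv : Gd.degree v = 2 := by
    have hnb : Gd.neighborFinset v = (G.neighborFinset v).erase w := by
      ext z
      rw [Finset.mem_erase, mem_neighborFinset, mem_neighborFinset, hGd, deleteEdges_adj]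
      simp only [Set.mem_singleton_iff, Sym2.congr_right]
      tauto
    rw [← card_neighborFinset_eq_degree, hnb,
      Finset.card_erase_of_mem ((mem_neighborFinset _ _ _).mpr hvw),
      card_neighborFinset_eq_degree, hcubic]
  have hdegdw : Gd.degree w = 2 := by
    have hnb : Gd.neighborFinset w = (G.neighborFinset w).erase v := by
      ext z
      rw [Finset.mem_erase, mem_neighborFinset, mem_neighborFinset, hGd, deleteEdges_adj]
      simp only [Set.mem_singleton_iff]
      rw [show s(v, w) = s(w, v) from Sym2.eq_swap, Sym2.congr_right]
      tauto
    rw [← card_neighborFinset_eq_degree, hnb,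
      Finset.card_erase_of_mem ((mem_neighborFinset _ _ _).mpr hvw.symm),
      card_neighborFinset_eq_degree, hcubic]
  have hdegdo : ∀ x, x ≠ v → x ≠ w → Gd.degree x = 3 := by
    intro x hxv hxw
    have hnb : Gd.neighborFinset x = G.neighborFinset x := by
      ext z
      rw [mem_neighborFinset, mem_neighborFinset, hGd, deleteEdges_adj]
      simp only [Set.mem_singleton_iff]
      constructor
      · exact fun h => h.1
      · intro h
        refine ⟨h, ?_⟩
        intro heq
        rw [Sym2.eq_iff] at heq
        rcases heq with ⟨h1, -⟩ | ⟨h2, -⟩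
        · exact hxv h1
        · exact hxw h2
    rw [← card_neighborFinset_eq_degree, hnb, card_neighborFinset_eq_degree, hcubic]
  -- G2 degrees
  have hd2v : G2.degree v = 1 := by have := hdegd v; rw [hdegdv, hdG1 v] at this; omega
  have hd2w : G2.degree w = 1 := by have := hdegd w; rw [hdegdw, hdG1 w] at this; omega
  have hd2o : ∀ x, x ≠ v → x ≠ w → G2.degree x = 2 := by
    intro x hxv hxw
    have := hdegd x; rw [hdegdo x hxv hxw, hdG1 x] at this; omega
  -- maximal path from v
  obtain ⟨y, p, hp, hmax⟩ := exists_max_path (G := G2) v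
  have hends : ∀ (y' : V) (q : G2.Walk v y') , (∀ z, G2.Adj y' z → z ∈ q.support) →
      q.IsPath → y' = v ∨ y' = w := by
    intro y' q hqmax hq
    by_contra hcon
    push_neg at hcon
    have := degree_le_one_of_max_path hac2 q hq hqmax
    rw [hd2o y' hcon.1 hcon.2] at this
    omega
  -- p is not nil
  have hpnn : ¬ p.Nil := by
    intro hnil
    have hlen0 : p.length = 0 := (Walk.nil_iff_length_eq).mp hnil
    have hy : y = v := by
      have := p.getVert_length
      rw [hlen0, p.getVert_zero] at this
      exact this.symm
    subst hy
    obtain ⟨z, hz⟩ := Finset.card_pos.mp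
      (by rw [card_neighborFinset_eq_degree, hd2v]; omega :
        0 < (G2.neighborFinset y).card)
    rw [mem_neighborFinset] at hz
    have hmem := hmax z hz
    rw [walk_support_eq_map_getVert, hlen0] at hmem
    simp [List.range_succ] at hmem
    exact G2.irrefl (hmem ▸ hz)
  have hyw : y = w := by
    rcases hends y p hmax hp with h | h
    · exfalso
      subst h
      have := (Walk.isPath_iff_eq_nil (p := p)).mp hp
      rw [this] at hpnn
      simp at hpnn
    · exact h
  have hyw2 : w = y := hyw.symm
  subst hyw2
  have hlenpos : 0 < p.length := by
    rw [Walk.not_nil_iff_lt_length] at hpnn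
    exact hpnn
  -- closure of the support under adjacency
  have hcov : ∀ z ∈ p.support, ∀ u', G2.Adj z u' → u' ∈ p.support := by
    intro z hz u' hadj
    rw [walk_support_eq_map_getVert] at hz
    obtain ⟨k, hkr, rfl⟩ := List.mem_map.mp hz
    rw [List.mem_range] at hkr
    have hk : k ≤ p.length := by omega
    by_cases hkv : k = 0
    · subst hkv
      rw [p.getVert_zero] at hadj
      have h1 : G2.Adj v (p.getVert 1) := Walk.adj_snd hpnn
      have : G2.neighborFinset v = {p.getVert 1} := by
        rw [Finset.eq_singleton_iff_unique_mem]
        refine ⟨(mem_neighborFinset _ _ _).mpr h1, ?_⟩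
        intro b hb
        have hcard : (G2.neighborFinset v).card ≤ 1 := by
          rw [card_neighborFinset_eq_degree, hd2v]
        exact Finset.card_le_one.mp hcard b hb _ ((mem_neighborFinset _ _ _).mpr h1)
      have hu' : u' ∈ G2.neighborFinset v := (mem_neighborFinset _ _ _).mpr hadj
      rw [this, Finset.mem_singleton] at hu'
      subst hu'
      exact walk_getVert_mem_support p (by omega)
    · by_cases hkw : k = p.length
      · subst hkw
        rw [p.getVert_length] at hadj
        have hrnn : ¬ p.reverse.Nil := by
          rw [Walk.nil_iff_length_eq, Walk.length_reverse]; omega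
        have h1 : G2.Adj w (p.reverse.getVert 1) := Walk.adj_snd hrnn
        have : G2.neighborFinset w = {p.reverse.getVert 1} := by
          rw [Finset.eq_singleton_iff_unique_mem]
          refine ⟨(mem_neighborFinset _ _ _).mpr h1, ?_⟩
          intro b hb
          have hcard : (G2.neighborFinset w).card ≤ 1 := by
            rw [card_neighborFinset_eq_degree, hd2w]
          exact Finset.card_le_one.mp hcard b hb _ ((mem_neighborFinset _ _ _).mpr h1)
        have hu' : u' ∈ G2.neighborFinset w := (mem_neighborFinset _ _ _).mpr hadj
        rw [this, Finset.mem_singleton] at hu'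
        subst hu'
        have := walk_getVert_mem_support p.reverse (k := 1)
          (by rw [Walk.length_reverse]; omega)
        rw [Walk.support_reverse, List.mem_reverse] at this
        exact this
      · -- interior vertex
        have hzv : p.getVert k ≠ v := by
          intro h
          exact hkv (walk_getVert_inj p hp.support_nodup hk (by omega)
            (h.trans (p.getVert_zero).symm))
        have hzw : p.getVert k ≠ w := by
          intro h
          exact hkw (walk_getVert_inj p hp.support_nodup hk le_rfl
            (h.trans (p.getVert_length).symm))
        have hdz : G2.degree (p.getVert k) = 2 := hd2o _ hzv hzw
        have hadja : G2.Adj (p.getVert k) (p.getVert (k - 1)) := by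
          have := p.adj_getVert_succ (show k - 1 < p.length by omega)
          rw [show k - 1 + 1 = k by omega] at this
          exact this.symm
        have hadjb : G2.Adj (p.getVert k) (p.getVert (k + 1)) :=
          p.adj_getVert_succ (by omega)
        have hne : p.getVert (k - 1) ≠ p.getVert (k + 1) := by
          intro h
          have := walk_getVert_inj p hp.support_nodup (show k - 1 ≤ p.length by omega)
            (show k + 1 ≤ p.length by omega) h
          omega
        have hsub : ({p.getVert (k - 1), p.getVert (k + 1)} : Finset V) ⊆
            G2.neighborFinset (p.getVert k) := by
          intro t ht
          simp only [Finset.mem_insert, Finset.mem_singleton] at ht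
          rcases ht with rfl | rfl
          · exact (mem_neighborFinset _ _ _).mpr hadja
          · exact (mem_neighborFinset _ _ _).mpr hadjb
        have hpair : ({p.getVert (k - 1), p.getVert (k + 1)} : Finset V).card = 2 := by
          rw [Finset.card_insert_of_notMem (by simp [hne]), Finset.card_singleton]
        have heq : ({p.getVert (k - 1), p.getVert (k + 1)} : Finset V) =
            G2.neighborFinset (p.getVert k) := by
          apply Finset.eq_of_subset_of_card_le hsub
          rw [card_neighborFinset_eq_degree, hdz, hpair]
        have hu' : u' ∈ G2.neighborFinset (p.getVert k) :=
          (mem_neighborFinset _ _ _).mpr hadj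
        rw [← heq] at hu'
        simp only [Finset.mem_insert, Finset.mem_singleton] at hu'
        rcases hu' with rfl | rfl
        · exact walk_getVert_mem_support p (by omega)
        · exact walk_getVert_mem_support p (by omega)
  -- the path covers all vertices
  have hfull : ∀ x, x ∈ p.support := by
    by_contra hcon
    push_neg at hcon
    obtain ⟨x, hx⟩ := hcon
    obtain ⟨y', q, hq, hqmax⟩ := exists_max_path (G := G2) x
    have hy' : y' = v ∨ y' = w := by
      by_contra hcon2
      push_neg at hcon2
      have := degree_le_one_of_max_path hac2 q hq hqmax
      rw [hd2o y' hcon2.1 hcon2.2] at this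
      omega
    have hy's : y' ∈ p.support := by
      rcases hy' with rfl | rfl
      · exact Walk.start_mem_support p
      · exact Walk.end_mem_support p
    have hPk : ∃ k, q.getVert k ∈ p.support := ⟨q.length, by rwa [Walk.getVert_length]⟩
    set k₀ := Nat.find hPk with hk₀def
    have hspec : q.getVert k₀ ∈ p.support := Nat.find_spec hPk
    have hk₀le : k₀ ≤ q.length := Nat.find_min' hPk (by rwa [Walk.getVert_length])
    have hk₀0 : k₀ ≠ 0 := by
      intro h
      rw [h, q.getVert_zero] at hspec
      exact hx hspec
    have hprev : q.getVert (k₀ - 1) ∉ p.support := Nat.find_min hPk (by omega)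
    have hadjq : G2.Adj (q.getVert (k₀ - 1)) (q.getVert k₀) := by
      have := q.adj_getVert_succ (show k₀ - 1 < q.length by omega)
      rwa [show k₀ - 1 + 1 = k₀ by omega] at this
    exact hprev (hcov _ hspec _ hadjq.symm)
  -- length of the path
  have hplen : p.length + 1 = n := by
    have htf' : p.support.toFinset = Finset.univ :=
      Finset.eq_univ_iff_forall.mpr (fun x => List.mem_toFinset.mpr (hfull x))
    have hc1 : p.support.toFinset.card = p.support.length :=
      List.toFinset_card_of_nodup hp.support_nodup
    rw [htf', Finset.card_univ] at hc1
    rw [Walk.length_support] at hc1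
    omega
  -- construct the equivalence
  haveI : NeZero n := ⟨by omega⟩
  have hvlt : ∀ i : ZMod n, i.val < n := fun i => ZMod.val_lt i
  have hval1 : ∀ i : ZMod n, (i + 1).val = (i.val + 1) % n := by
    intro i
    rw [ZMod.val_add, ZMod.val_one_eq_one_mod, Nat.mod_eq_of_lt (show 1 < n by omega)]
  set g : ZMod n → V := fun i => p.getVert i.val with hgdef
  have hginj : Function.Injective g := by
    intro i j hij
    have h1 := hvlt i; have h2 := hvlt j
    have := walk_getVert_inj p hp.support_nodup (show i.val ≤ p.length by omega)
      (show j.val ≤ p.length by omega) hij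
    exact ZMod.val_injective _ this
  have hbij : Function.Bijective g := by
    rw [Fintype.bijective_iff_injective_and_card]
    exact ⟨hginj, by rw [ZMod.card, hn]⟩
  refine ⟨Equiv.ofBijective g hbij, ?_⟩
  intro i
  show G.Adj (g i) (g (i + 1))
  rw [hgdef]
  simp only
  rw [hval1 i]
  rcases Nat.lt_or_ge (i.val + 1) n with h | h
  · rw [Nat.mod_eq_of_lt h]
    exact hG2le (p.adj_getVert_succ (by omega))
  · have hiv : i.val + 1 = n := by have := hvlt i; omega
    rw [hiv, Nat.mod_self, p.getVert_zero]
    have : i.val = p.length := by omega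
    rw [this, p.getVert_length]
    exact hvw.symm
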